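/- Let G be a finite group, K ⊴ G a proper normal subgroup, and H ≤ G a subgroup that intersects every coset of K (equivalently, HK = G). Let σ be any nontrivial finite-dimensional irreducible complex representation of the quotient group G/K, and let τ = σ ∘ φ be its lift to G along the quotient homomorphism φ : G → G/K. Then τ(H) := (1/|H|) Σ_{h∈H} τ(h) = 0; in particular H has a missing harmonic. -/

import Mathlib

open scoped Classical

/-- Let `K` be a proper normal subgroup of a finite group `G`, and let
`H ≤ G` intersect every coset of `K` (equivalently, `HK = G`).  If `σ` is a nontrivial
finite-dimensional irreducible complex representation of `G ⧸ K` and `τ = σ ∘ φ` is its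
lift to `G` along the quotient map `φ : G → G ⧸ K`, then the averaging operator
`τ(H) = (1/|H|) ∑_{h ∈ H} τ(h)` is zero; in particular `H` has a missing harmonic. -/
theorem lift_of_nontrivial_irreducible_is_missing_harmonic
    {G : Type} [Group G] [Fintype G] (K : Subgroup G) [K.Normal] (hK : K ≠ ⊤)
    (H : Subgroup G) (hHK : ∀ g : G, ∃ h ∈ H, ∃ k ∈ K, g = h * k)
    (σ : FDRep ℂ (G ⧸ K)) [CategoryTheory.Simple σ]
    (hσ : ∃ x : G ⧸ K, σ.ρ x ≠ LinearMap.id) :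
    (Fintype.card H : ℂ)⁻¹ •
        (∑ h : H, σ.ρ (QuotientGroup.mk' K (h : G))) = 0 := by
  haveI : Fintype (G ⧸ K) := Fintype.ofFinite _
  haveI : Nontrivial σ := by
    rw [← not_subsingleton_iff_nontrivial]
    intro hs
    obtain ⟨x, hx⟩ := hσ
    exact hx (by ext v; exact Subsingleton.elim _ _)
  set π : σ →ₗ[ℂ] σ := ∑ q : G ⧸ K, (σ.ρ q : σ →ₗ[ℂ] σ) with hπ
  have hid : (LinearMap.id : σ →ₗ[ℂ] σ) ≠ 0 := by
    obtain ⟨v, hv⟩ := exists_ne (0 : σ)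
    intro h
    exact hv (by simpa using LinearMap.congr_fun h v)
  set N : ℂ := (Fintype.card (G ⧸ K) : ℂ) with hN
  have hN0 : N ≠ 0 := by
    simp [hN, Fintype.card_ne_zero]
  -- right invariance of π
  have hcompr : ∀ q : G ⧸ K, π * σ.ρ q = π := by
    intro q
    rw [hπ, Finset.sum_mul]
    exact Fintype.sum_equiv (Equiv.mulRight q) _ _ (fun x => by
      simp [Equiv.coe_mulRight, map_mul])
  -- left invariance of π
  have hcompl : ∀ q : G ⧸ K, σ.ρ q * π = π := by
    intro q
    rw [hπ, Finset.mul_sum]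
    exact Fintype.sum_equiv (Equiv.mulLeft q) _ _ (fun x => by
      simp [Equiv.coe_mulLeft, map_mul])
  -- π as a morphism of representations
  let f : σ ⟶ σ := ⟨FGModuleCat.ofHom π, fun g => by
    refine CategoryTheory.InducedCategory.hom_ext (ModuleCat.hom_ext ?_)
    show π.comp (σ.ρ g) = (σ.ρ g).comp π
    rw [← Module.End.mul_eq_comp, ← Module.End.mul_eq_comp, hcompr, hcompl]⟩
  obtain ⟨c, hc⟩ := CategoryTheory.endomorphism_simple_eq_smul_id ℂ f
  have hπc : π = c • LinearMap.id := (congrArg (fun φ => φ.hom.hom.hom) hc).symm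
  -- π * π = N • π
  have hsq : π * π = N • π := by
    calc π * π = ∑ q : G ⧸ K, π * σ.ρ q := by rw [hπ, Finset.mul_sum]
    _ = ∑ _q : G ⧸ K, π := Finset.sum_congr rfl fun q _ => hcompr q
    _ = N • π := by
        rw [Finset.sum_const, Finset.card_univ, hN, Nat.cast_smul_eq_nsmul]
  have hcc : c * c = N * c := by
    rw [hπc] at hsq
    rw [smul_mul_smul_comm, Module.End.mul_eq_comp, LinearMap.id_comp, smul_smul] at hsq
    have := sub_eq_zero.mpr hsq
    rw [← sub_smul] at this
    rcases smul_eq_zero.mp this with h | h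
    · linear_combination h
    · exact absurd h hid
  have hc0 : c = 0 := by
    rcases mul_eq_mul_right_iff.mp hcc with h | h
    · exfalso
      obtain ⟨x, hx⟩ := hσ
      have h1 : σ.ρ x * π = π := hcompl x
      rw [hπc, h, mul_smul_comm, Module.End.mul_eq_comp, LinearMap.comp_id] at h1
      exact hx (smul_right_injective _ hN0 h1)
    · exact h
  have hπ0 : π = 0 := by rw [hπc, hc0, zero_smul]
  set S : σ →ₗ[ℂ] σ := ∑ h : H, (σ.ρ (QuotientGroup.mk' K (h : G)) : σ →ₗ[ℂ] σ) with hS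
  have hSr : ∀ q : G ⧸ K, S * σ.ρ q = S := by
    intro q
    obtain ⟨g, hg⟩ := QuotientGroup.mk'_surjective K q
    obtain ⟨h₀, hh₀, k, hk, rfl⟩ := hHK g
    have hk1 : QuotientGroup.mk' K k = 1 := (QuotientGroup.eq_one_iff k).mpr hk
    have hq : QuotientGroup.mk' K h₀ = q := by rw [← hg, map_mul, hk1, mul_one]
    rw [hS, Finset.sum_mul, ← hq]
    exact Fintype.sum_equiv (Equiv.mulRight (⟨h₀, hh₀⟩ : H)) _ _ (fun x => by
      simp [Equiv.coe_mulRight, ← map_mul])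
  have hNS : N • S = 0 := by
    calc N • S = ∑ _q : G ⧸ K, S := by
          rw [Finset.sum_const, Finset.card_univ, hN, Nat.cast_smul_eq_nsmul]
    _ = ∑ q : G ⧸ K, S * σ.ρ q := Finset.sum_congr rfl fun q _ => (hSr q).symm
    _ = S * π := by rw [hπ, Finset.mul_sum]
    _ = 0 := by rw [hπ0, mul_zero]
  have hS0 : S = 0 := by
    rcases smul_eq_zero.mp hNS with h | h
    · exact absurd h hN0
    · exact h
  rw [hS0, smul_zero]
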